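/- Let (H, α, σ) be a unicellular map with face permutation γ = ασ, root r, and linear order <_m on H defined by r < γ(r) < γ²(r) < ... < γ^{2n-1}(r). Call h ∈ H a down-step if σ(h) ≤_m h. Then the number of down-steps equals n + 1, where 2n = |H|. -/

import Mathlib

open Equiv

/-- in a rooted unicellular map `(H, α, σ)` with `|H| = 2n`,
face `γ = ασ` a single `2n`-cycle and root `r`, the linear order `<ₘ` on `H`
is given by `r < γ(r) < γ²(r) < ⋯ < γ^{2n-1}(r)`; it is encoded by a
bijection `ord : Fin (2n) ≃ H` with `ord 0 = r` and `γ (ord k) = ord (k+1)`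
(cyclically).  A half-edge `h` is a down-step if `σ(h) ≤ₘ h`.  Then the
number of down-steps equals `n + 1`. -/
theorem downsteps_count {H : Type*} [Fintype H] [DecidableEq H]
    (n : ℕ) (hn : 1 ≤ n) (hcard : Fintype.card H = 2 * n)
    (α σ : Equiv.Perm H)
    (hinv : α * α = 1) (hfp : ∀ h : H, α h ≠ h)
    (hface : (α * σ).IsCycle ∧ (α * σ).support = Finset.univ)
    (r : H) (ord : Fin (2 * n) ≃ H)
    (hord0 : ord ⟨0, by omega⟩ = r)
    (hordsucc : ∀ k : Fin (2 * n), (α * σ) (ord k) = ord (k + ⟨1, by omega⟩)) :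
    (Finset.univ.filter (fun h : H => ord.symm (σ h) ≤ ord.symm h)).card
      = n + 1 := by
  classical
  haveI : NeZero (2 * n) := ⟨by omega⟩
  have hm2 : 2 ≤ 2 * n := by omega
  have hone : (⟨1, by omega⟩ : Fin (2 * n)) = 1 := by
    ext
    simp [Fin.val_one, Nat.mod_eq_of_lt hm2, Nat.add_comm]
  set β : Equiv.Perm (Fin (2 * n)) := (ord.trans α).trans ord.symm with hβ
  have hβapp : ∀ k, β k = ord.symm (α (ord k)) := fun k => rfl
  have hαα : ∀ h, α (α h) = h := by
    intro h
    have := congrArg (fun p : Equiv.Perm H => p h) hinv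
    simpa [Equiv.Perm.mul_apply] using this
  have hβinv : ∀ k, β (β k) = k := by
    intro k; simp [hβapp, hαα]
  have hβfp : ∀ k, β k ≠ k := by
    intro k h
    apply hfp (ord k)
    have := congrArg ord h
    simpa [hβapp] using this
  have hs : ∀ k : Fin (2 * n), ord.symm (σ (ord k)) = β (k + 1) := by
    intro k
    have h1 := hordsucc k
    rw [hone] at h1
    have h2 : σ (ord k) = α (ord (k + 1)) := by
      have := congrArg α h1
      simpa [Equiv.Perm.mul_apply, hαα] using this
    rw [h2, hβapp]
  have step1 : (Finset.univ.filter fun h : H => ord.symm (σ h) ≤ ord.symm h).card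
      = (Finset.univ.filter fun k : Fin (2 * n) => β (k + 1) ≤ k).card := by
    apply Finset.card_equiv ord.symm
    intro h
    have := hs (ord.symm h)
    rw [Equiv.apply_symm_apply] at this
    simp [this]
  have step2 : (Finset.univ.filter fun k : Fin (2 * n) => β (k + 1) ≤ k).card
      = (Finset.univ.filter fun j : Fin (2 * n) => β j ≤ j - 1).card := by
    apply Finset.card_equiv (Equiv.addRight (1 : Fin (2 * n)))
    intro k
    simp [Equiv.addRight, add_sub_cancel_right]
  have hsubval : ∀ j : Fin (2 * n), ((j - 1 : Fin (2 * n)) : ℕ) = (j.val + (2 * n - 1)) % (2 * n) := by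
    intro j
    rw [Fin.sub_def]
    simp [Fin.val_one, Nat.mod_eq_of_lt hm2, Nat.add_comm]
  have hval : ∀ j : Fin (2 * n), j ≠ 0 → ((j - 1 : Fin (2 * n)) : ℕ) = j.val - 1 := by
    intro j hj
    rw [hsubval]
    have h1 : j.val ≠ 0 := fun h => hj (Fin.ext (by simp [h]))
    have h2 := j.isLt
    have h3 : j.val + (2 * n - 1) = (j.val - 1) + 2 * n := by omega
    rw [h3, Nat.add_mod_right, Nat.mod_eq_of_lt (by omega)]
  have hval0 : ((0 - 1 : Fin (2 * n)) : ℕ) = 2 * n - 1 := by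
    rw [hsubval, Fin.val_zero, Nat.zero_add, Nat.mod_eq_of_lt (by omega)]
  have hsubiff : ∀ j : Fin (2 * n), j ≠ 0 → (β j ≤ j - 1 ↔ β j < j) := by
    intro j hj
    rw [Fin.le_def, Fin.lt_def, hval j hj]
    have h1 : (β j).val ≠ j.val := fun h => hβfp j (Fin.ext h)
    have h2 : j.val ≠ 0 := fun h => hj (Fin.ext (by simp [h]))
    have h3 := (β j).isLt
    omega
  have h0mem : β (0 : Fin (2 * n)) ≤ (0 : Fin (2 * n)) - 1 := by
    rw [Fin.le_def, hval0]
    have := (β 0).isLt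
    omega
  have step3 : (Finset.univ.filter fun j : Fin (2 * n) => β j ≤ j - 1)
      = insert (0 : Fin (2 * n)) (Finset.univ.filter fun j => β j < j) := by
    ext j
    simp only [Finset.mem_filter, Finset.mem_insert, Finset.mem_univ, true_and]
    by_cases hj : j = 0
    · subst hj
      constructor
      · intro _; exact Or.inl rfl
      · intro _; exact h0mem
    · simp [hj, hsubiff j hj]
  have h0not : (0 : Fin (2 * n)) ∉ (Finset.univ.filter fun j : Fin (2 * n) => β j < j) := by
    simp only [Finset.mem_filter, Finset.mem_univ, true_and, Fin.lt_def, Fin.val_zero]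
    omega
  have hST : (Finset.univ.filter fun j : Fin (2 * n) => β j < j).card
      = (Finset.univ.filter fun j : Fin (2 * n) => ¬ β j < j).card := by
    apply Finset.card_bij (fun j _ => β j)
    · intro j hj
      simp only [Finset.mem_filter, Finset.mem_univ, true_and] at *
      rw [hβinv]
      exact not_lt.mpr hj.le
    · intro a ha b hb hab
      exact β.injective hab
    · intro t ht
      simp only [Finset.mem_filter, Finset.mem_univ, true_and] at ht
      refine ⟨β t, ?_, hβinv t⟩
      simp only [Finset.mem_filter, Finset.mem_univ, true_and, hβinv]
      exact lt_of_le_of_ne (not_lt.mp ht) (Ne.symm (hβfp t))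
  have htotal := Finset.card_filter_add_card_filter_not
      (s := (Finset.univ : Finset (Fin (2 * n)))) (p := fun j => β j < j)
  have huniv : (Finset.univ : Finset (Fin (2 * n))).card = 2 * n := by simp
  rw [step1, step2, step3, Finset.card_insert_of_notMem h0not]
  omega
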